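/- Let T₀ > 0, 0 < μ₁ < μ₂, ω a modulus of continuity, θ : (0,T₀) → (0,∞) continuous and nonincreasing, and let c* ∈ D(T₀,μ₁,μ₂,ω,θ;T₁,γ,η) for admissible parameters T₁, γ, η. Set ν₂ := (1/2)·min{1, √μ₁/π}. Let λ > 0 satisfy ν₂·ω(1/λ) ≤ 8γ³ and (ν₂/(2γ))·ω(1/λ) ≤ min{γ² − μ₁, μ₂ − γ²}. Let 0 < a < b < T₁ be such that a·γ·λ/(2π) and b·γ·λ/(2π) are natural numbers (so that k := γ·λ·(b−a)/(2π) is a natural number), ω(b) ≤ η·ω(T₁ − b), and λ·ω(1/λ) ≥ θ(a). For i = 0,1,…,k set t_i := a + (2π/(γλ))·i and, for i ≥ 1, ε_i := ν₂·θ(t_i). Define c_λ(t) := c*(t) for t ∈ [0,a] ∪ [b,T₀] and c_λ(t) := γ² − φ_{ε_i,γ,λ}(t) for t ∈ [t_{i−1}, t_i], i = 1,…,k. Then c_λ belongs to PS(T₀,μ₁,μ₂,ω,θ) and |c_λ(t) − c*(t)| ≤ (ν₂/(2γ))·ω(1/λ) for every t ∈ [0,T₀]. -/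

import Mathlib

open Set Filter MeasureTheory

/-- A modulus of continuity: positive for positive arguments, tends to `0` at `0⁺`,
nondecreasing, and `σ ↦ σ / ω σ` is nondecreasing on `(0, ∞)`. -/
def IsModulusOfContinuity (ω : ℝ → ℝ) : Prop :=
  (∀ σ : ℝ, 0 < σ → 0 < ω σ) ∧
  Tendsto ω (nhdsWithin 0 (Ioi 0)) (nhds 0) ∧
  (∀ s t : ℝ, 0 ≤ s → s ≤ t → ω s ≤ ω t) ∧
  (∀ s t : ℝ, 0 < s → s ≤ t → s / ω s ≤ t / ω t)

/-- Membership in the class `PS(T₀, μ₁, μ₂, ω, θ)` of propagation speeds. -/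
def MemPS (T0 μ1 μ2 : ℝ) (ω θ : ℝ → ℝ) (c : ℝ → ℝ) : Prop :=
  ContinuousOn c (Icc 0 T0) ∧
  LocallyLipschitzOn (Ioo 0 T0) c ∧
  (∀ t ∈ Ioo 0 T0, μ1 ≤ c t ∧ c t ≤ μ2) ∧
  (∀ t ∈ Icc 0 T0, ∀ s ∈ Icc 0 T0, |c t - c s| ≤ ω |t - s|) ∧
  (∀ᵐ t ∂(volume.restrict (Ioo 0 T0)), |deriv c t| ≤ θ t)

/-- The key quantity `m(λ) = inf { λ ω(1/λ) s + ∫_s^{T₀} θ : s ∈ (0, T₀] }`. -/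
noncomputable def mFun (T0 : ℝ) (ω θ : ℝ → ℝ) (lam : ℝ) : ℝ :=
  sInf ((fun s => lam * ω (1 / lam) * s + ∫ t in s..T0, θ t) '' Ioc 0 T0)

/-- Derivative within the time interval `[0, T₀]`. -/
noncomputable def der (T0 : ℝ) (u : ℝ → ℝ) : ℝ → ℝ :=
  fun t => derivWithin u (Icc 0 T0) t

/-- `u` is a (twice differentiable) solution of `u'' + λ² c(t) u = 0` on `[0, T₀]`. -/
def IsSol (T0 lam : ℝ) (c u : ℝ → ℝ) : Prop :=
  ∀ t ∈ Icc 0 T0,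
    HasDerivWithinAt u (der T0 u t) (Icc 0 T0) t ∧
    HasDerivWithinAt (der T0 u) (-(lam ^ 2 * c t * u t)) (Icc 0 T0) t

/-- Membership in the class `D(T₀,μ₁,μ₂,ω,θ; T₁,γ,η)`. -/
def MemD (T0 μ1 μ2 : ℝ) (ω θ : ℝ → ℝ) (T1 γ η : ℝ) (c : ℝ → ℝ) : Prop :=
  MemPS T0 μ1 μ2 ω θ c ∧
  (∀ t ∈ Icc 0 T1, c t = γ ^ 2) ∧
  (∀ t ∈ Icc 0 T0, ∀ s ∈ Icc 0 T0, |c t - c s| ≤ (1 - η) * ω |t - s|)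

/-- The building-block perturbation
`φ_{ε,γ,λ}(t) = (ε/(4γλ)) sin(2γλt) + (ε²/(64γ⁴λ²)) sin⁴(γλt)`. -/
noncomputable def phiF (ε γ lam t : ℝ) : ℝ :=
  ε / (4 * γ * lam) * Real.sin (2 * γ * lam * t) +
    ε ^ 2 / (64 * γ ^ 4 * lam ^ 2) * (Real.sin (γ * lam * t)) ^ 4

/-- The constant `ν₂ = (1/2) · min{1, √μ₁/π}`. -/
noncomputable def nu2 (μ1 : ℝ) : ℝ := 1 / 2 * min 1 (Real.sqrt μ1 / Real.pi)

/-- The nodes `tᵢ = a + (2π/(γλ)) i` of the `θ`-construction. -/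
noncomputable def tNode (a γ lam : ℝ) (i : ℕ) : ℝ := a + 2 * Real.pi / (γ * lam) * i

lemma phi_hasDerivAt {γ lam : ℝ} (hγ : 0 < γ) (hlam : 0 < lam) (ε t : ℝ) :
    HasDerivAt (phiF ε γ lam)
      (ε / 2 * Real.cos (2 * γ * lam * t) +
        ε ^ 2 / (16 * γ ^ 3 * lam) * (Real.sin (γ * lam * t) ^ 3 * Real.cos (γ * lam * t))) t := by
  have hin1 : HasDerivAt (fun x : ℝ => 2 * γ * lam * x) (2 * γ * lam) t := by
    simpa using (hasDerivAt_id t).const_mul (2 * γ * lam)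
  have hin2 : HasDerivAt (fun x : ℝ => γ * lam * x) (γ * lam) t := by
    simpa using (hasDerivAt_id t).const_mul (γ * lam)
  have h1 : HasDerivAt (fun x : ℝ => Real.sin (2 * γ * lam * x))
      (Real.cos (2 * γ * lam * t) * (2 * γ * lam)) t :=
    (Real.hasDerivAt_sin (2 * γ * lam * t)).comp t hin1
  have hs : HasDerivAt (fun x : ℝ => Real.sin (γ * lam * x))
      (Real.cos (γ * lam * t) * (γ * lam)) t :=
    (Real.hasDerivAt_sin (γ * lam * t)).comp t hin2
  have h2 : HasDerivAt (fun x : ℝ => Real.sin (γ * lam * x) ^ 4)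
      (4 * Real.sin (γ * lam * t) ^ 3 * (Real.cos (γ * lam * t) * (γ * lam))) t := by
    simpa using hs.fun_pow 4
  have h := (h1.const_mul (ε / (4 * γ * lam))).add (h2.const_mul (ε ^ 2 / (64 * γ ^ 4 * lam ^ 2)))
  have hγ' : (γ : ℝ) ≠ 0 := ne_of_gt hγ
  have hlam' : (lam : ℝ) ≠ 0 := ne_of_gt hlam
  refine h.congr_deriv ?_
  field_simp
  ring

lemma phi_deriv_bound {ε γ lam : ℝ} (hγ : 0 < γ) (hlam : 0 < lam) (hε : 0 ≤ ε)
    (hcond : ε ≤ 8 * γ ^ 3 * lam) (t : ℝ) :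
    |ε / 2 * Real.cos (2 * γ * lam * t) +
        ε ^ 2 / (16 * γ ^ 3 * lam) * (Real.sin (γ * lam * t) ^ 3 * Real.cos (γ * lam * t))| ≤ ε := by
  have hc1 : |Real.cos (2 * γ * lam * t)| ≤ 1 := Real.abs_cos_le_one _
  have hc2 : |Real.cos (γ * lam * t)| ≤ 1 := Real.abs_cos_le_one _
  have hs1 : |Real.sin (γ * lam * t)| ≤ 1 := Real.abs_sin_le_one _
  have hs3 : |Real.sin (γ * lam * t) ^ 3| ≤ 1 := by
    rw [abs_pow]; exact pow_le_one₀ (abs_nonneg _) hs1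
  have h1 : |ε / 2 * Real.cos (2 * γ * lam * t)| ≤ ε / 2 := by
    rw [abs_mul]
    calc |ε / 2| * |Real.cos (2 * γ * lam * t)| ≤ |ε / 2| * 1 :=
          mul_le_mul_of_nonneg_left hc1 (abs_nonneg _)
      _ = ε / 2 := by rw [mul_one, abs_of_nonneg (by linarith)]
  have hco : 0 ≤ ε ^ 2 / (16 * γ ^ 3 * lam) := by positivity
  have h2 : |ε ^ 2 / (16 * γ ^ 3 * lam) * (Real.sin (γ * lam * t) ^ 3 * Real.cos (γ * lam * t))| ≤
      ε ^ 2 / (16 * γ ^ 3 * lam) := by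
    rw [abs_mul, abs_mul, abs_of_nonneg hco]
    have : |Real.sin (γ * lam * t) ^ 3| * |Real.cos (γ * lam * t)| ≤ 1 :=
      mul_le_one₀ hs3 (abs_nonneg _) hc2
    nlinarith [hco]
  have h3 : ε ^ 2 / (16 * γ ^ 3 * lam) ≤ ε / 2 := by
    rw [div_le_iff₀ (by positivity)]
    nlinarith
  calc _ ≤ |ε / 2 * Real.cos (2 * γ * lam * t)| +
      |ε ^ 2 / (16 * γ ^ 3 * lam) * (Real.sin (γ * lam * t) ^ 3 * Real.cos (γ * lam * t))| :=
        abs_add_le _ _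
    _ ≤ ε / 2 + ε / 2 := add_le_add h1 (h2.trans h3)
    _ = ε := by ring

lemma phi_lipschitz {ε γ lam : ℝ} (hγ : 0 < γ) (hlam : 0 < lam) (hε : 0 ≤ ε)
    (hcond : ε ≤ 8 * γ ^ 3 * lam) (t s : ℝ) :
    |phiF ε γ lam t - phiF ε γ lam s| ≤ ε * |t - s| := by
  have := Convex.norm_image_sub_le_of_norm_hasDerivWithin_le
    (f := phiF ε γ lam)
    (f' := fun t => ε / 2 * Real.cos (2 * γ * lam * t) +
        ε ^ 2 / (16 * γ ^ 3 * lam) * (Real.sin (γ * lam * t) ^ 3 * Real.cos (γ * lam * t)))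
    (C := ε) (s := univ)
    (fun x _ => (phi_hasDerivAt hγ hlam ε x).hasDerivWithinAt)
    (fun x _ => by simpa [Real.norm_eq_abs] using phi_deriv_bound hγ hlam hε hcond x)
    convex_univ (mem_univ s) (mem_univ t)
  simpa [Real.norm_eq_abs] using this

lemma phi_bound {ε γ lam : ℝ} (hγ : 0 < γ) (hlam : 0 < lam) (hε : 0 ≤ ε)
    (hcond : ε ≤ 8 * γ ^ 3 * lam) (t : ℝ) :
    |phiF ε γ lam t| ≤ ε / (2 * γ * lam) := by
  have hs1 : |Real.sin (2 * γ * lam * t)| ≤ 1 := Real.abs_sin_le_one _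
  have hs4 : |Real.sin (γ * lam * t) ^ 4| ≤ 1 := by
    rw [abs_pow]; exact pow_le_one₀ (abs_nonneg _) (Real.abs_sin_le_one _)
  have hco1 : 0 ≤ ε / (4 * γ * lam) := by positivity
  have hco2 : 0 ≤ ε ^ 2 / (64 * γ ^ 4 * lam ^ 2) := by positivity
  have h1 : |ε / (4 * γ * lam) * Real.sin (2 * γ * lam * t)| ≤ ε / (4 * γ * lam) := by
    rw [abs_mul, abs_of_nonneg hco1]
    nlinarith [abs_nonneg (Real.sin (2 * γ * lam * t))]
  have h2 : |ε ^ 2 / (64 * γ ^ 4 * lam ^ 2) * Real.sin (γ * lam * t) ^ 4| ≤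
      ε ^ 2 / (64 * γ ^ 4 * lam ^ 2) := by
    rw [abs_mul, abs_of_nonneg hco2]
    nlinarith [abs_nonneg (Real.sin (γ * lam * t) ^ 4)]
  have h3 : ε ^ 2 / (64 * γ ^ 4 * lam ^ 2) ≤ ε / (8 * γ * lam) := by
    rw [div_le_div_iff₀ (by positivity) (by positivity)]
    have h5 : ε * (8 * γ * lam) ≤ 8 * γ ^ 3 * lam * (8 * γ * lam) :=
      mul_le_mul_of_nonneg_right hcond (by positivity)
    have h6 : ε * (ε * (8 * γ * lam)) ≤ ε * (8 * γ ^ 3 * lam * (8 * γ * lam)) :=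
      mul_le_mul_of_nonneg_left h5 hε
    nlinarith [h6]
  have h4 : ε / (4 * γ * lam) + ε / (8 * γ * lam) ≤ ε / (2 * γ * lam) := by
    rw [div_add_div _ _ (by positivity : (4:ℝ) * γ * lam ≠ 0) (by positivity : (8:ℝ) * γ * lam ≠ 0),
      div_le_div_iff₀ (by positivity) (by positivity)]
    nlinarith [mul_pos hγ hlam, mul_pos (mul_pos hγ hlam) (mul_pos hγ hlam)]
  calc |phiF ε γ lam t| ≤ _ + _ := abs_add_le _ _
    _ ≤ ε / (4 * γ * lam) + ε ^ 2 / (64 * γ ^ 4 * lam ^ 2) := add_le_add h1 h2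
    _ ≤ ε / (4 * γ * lam) + ε / (8 * γ * lam) := by linarith
    _ ≤ ε / (2 * γ * lam) := h4

set_option maxHeartbeats 1600000 in
/-- `θ`-construction, Proposition `prop:theta`, statement (1). -/
theorem theta_construction_membership
    (T0 μ1 μ2 T1 γ η : ℝ) (ω θ : ℝ → ℝ)
    (hT0 : 0 < T0) (hμ1 : 0 < μ1) (hμ12 : μ1 < μ2)
    (hω : IsModulusOfContinuity ω)
    (hθcont : ContinuousOn θ (Ioo 0 T0))
    (hθpos : ∀ t ∈ Ioo 0 T0, 0 < θ t)
    (hθmono : AntitoneOn θ (Ioo 0 T0))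
    (hT1 : T1 ∈ Ioo 0 T0) (hγ : 0 < γ) (hγ2 : γ ^ 2 ∈ Ioo μ1 μ2) (hη : η ∈ Ioo 0 1)
    (cstar : ℝ → ℝ) (hcstar : MemD T0 μ1 μ2 ω θ T1 γ η cstar)
    (lam : ℝ) (hlam : 0 < lam)
    (hlam1 : nu2 μ1 * ω (1 / lam) ≤ 8 * γ ^ 3)
    (hlam2 : nu2 μ1 / (2 * γ) * ω (1 / lam) ≤ min (γ ^ 2 - μ1) (μ2 - γ ^ 2))
    (a b : ℝ) (ha : 0 < a) (hab : a < b) (hb : b < T1)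
    (k : ℕ) (hk : (k : ℝ) = γ * lam * (b - a) / (2 * Real.pi))
    (haN : ∃ n : ℕ, a * γ * lam / (2 * Real.pi) = n)
    (hbN : ∃ n : ℕ, b * γ * lam / (2 * Real.pi) = n)
    (hωb : ω b ≤ η * ω (T1 - b))
    (hθa : θ a ≤ lam * ω (1 / lam))
    (cl : ℝ → ℝ)
    (hclOut : ∀ t ∈ Icc 0 a ∪ Icc b T0, cl t = cstar t)
    (hclIn : ∀ i : ℕ, 1 ≤ i → i ≤ k →
      ∀ t ∈ Icc (tNode a γ lam (i - 1)) (tNode a γ lam i),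
        cl t = γ ^ 2 - phiF (nu2 μ1 * θ (tNode a γ lam i)) γ lam t) :
    MemPS T0 μ1 μ2 ω θ cl ∧
    ∀ t ∈ Icc 0 T0, |cl t - cstar t| ≤ nu2 μ1 / (2 * γ) * ω (1 / lam) := by
  obtain ⟨hωpos, hωtend, hωmono, hωslope⟩ := hω
  obtain ⟨⟨hc_cont, hc_lip, hc_bnd, hc_mod, hc_ae⟩, hc1, hc2⟩ := hcstar
  have hπ : 0 < Real.pi := Real.pi_pos
  have hgl : 0 < γ * lam := mul_pos hγ hlam
  have hbT0 : b < T0 := hb.trans hT1.2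
  have haT1 : a < T1 := hab.trans hb
  set ν := nu2 μ1 with hν_def
  set W := ω (1 / lam) with hW_def
  have hWpos : 0 < W := hωpos _ (by positivity)
  have hsqrt : 0 < Real.sqrt μ1 := Real.sqrt_pos.mpr hμ1
  have hsγ : Real.sqrt μ1 < γ := by
    rw [show γ = Real.sqrt (γ ^ 2) from (Real.sqrt_sq hγ.le).symm]
    exact Real.sqrt_lt_sqrt hμ1.le hγ2.1
  have hνpos : 0 < ν := by
    rw [hν_def, nu2]
    have : 0 < min 1 (Real.sqrt μ1 / Real.pi) := lt_min one_pos (by positivity)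
    linarith
  have hν1 : ν ≤ 1 / 2 := by
    rw [hν_def, nu2]
    have := min_le_left 1 (Real.sqrt μ1 / Real.pi)
    nlinarith
  have hπ0 : Real.pi ≠ 0 := hπ.ne'
  have hgl0 : γ * lam ≠ 0 := hgl.ne'
  have hν2 : ν ≤ Real.sqrt μ1 / (2 * Real.pi) := by
    rw [hν_def, nu2]
    have h1 : min 1 (Real.sqrt μ1 / Real.pi) ≤ Real.sqrt μ1 / Real.pi := min_le_right _ _
    have h2 : 1 / 2 * (Real.sqrt μ1 / Real.pi) = Real.sqrt μ1 / (2 * Real.pi) := by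
      field_simp
    linarith [mul_le_mul_of_nonneg_left h1 (by norm_num : (0:ℝ) ≤ 1 / 2)]
  have hνγ : ν / γ ≤ 1 := by
    rw [div_le_one hγ]
    have h1 : Real.sqrt μ1 / (2 * Real.pi) ≤ Real.sqrt μ1 := by
      rw [div_le_iff₀ (by positivity)]
      nlinarith [Real.pi_gt_three]
    linarith
  set L := ν * (lam * W) with hL_def
  set M := ν / (2 * γ) * W with hM_def
  have hLpos : 0 < L := by positivity
  have hMpos : 0 < M := by positivity
  have h2M : 2 * M ≤ W := by
    rw [hM_def]
    have : 2 * (ν / (2 * γ) * W) = ν / γ * W := by field_simp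
    rw [this]
    nlinarith
  -- node facts
  set d := 2 * Real.pi / (γ * lam) with hd_def
  have hd : 0 < d := by positivity
  have htN : ∀ i : ℕ, tNode a γ lam i = a + d * i := fun i => by rw [tNode, hd_def]
  have htNmono : ∀ i j : ℕ, i ≤ j → tNode a γ lam i ≤ tNode a γ lam j := by
    intro i j hij
    rw [htN, htN]
    have h : (i : ℝ) ≤ j := Nat.cast_le.mpr hij
    exact add_le_add_right (mul_le_mul_of_nonneg_left h hd.le) a
  have htN0 : tNode a γ lam 0 = a := by rw [htN]; simp
  have hdk : d * k = b - a := by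
    rw [hd_def, hk]; field_simp
  have htNk : tNode a γ lam k = b := by rw [htN]; linarith
  have hk1 : 1 ≤ k := by
    rcases Nat.eq_zero_or_pos k with h | h
    · exfalso; rw [h] at hdk; simp at hdk; linarith
    · exact h
  obtain ⟨n, hn⟩ := haN
  have hgla : γ * lam * a = 2 * Real.pi * n := by
    field_simp at hn; linarith
  have hargN : ∀ i : ℕ, γ * lam * tNode a γ lam i = (2 * (n + i) : ℕ) * Real.pi := by
    intro i
    rw [htN, hd_def]
    push_cast
    field_simp
    linarith [hgla]
  have hsinN : ∀ i : ℕ, Real.sin (γ * lam * tNode a γ lam i) = 0 := by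
    intro i; rw [hargN]; exact Real.sin_nat_mul_pi _
  have hsinN2 : ∀ i : ℕ, Real.sin (2 * γ * lam * tNode a γ lam i) = 0 := by
    intro i
    have h2 : 2 * γ * lam * tNode a γ lam i = 2 * (γ * lam * tNode a γ lam i) := by ring
    have h3 : 2 * γ * lam * tNode a γ lam i = (2 * (2 * (n + i)) : ℕ) * Real.pi := by
      rw [h2, hargN i]; push_cast; ring
    rw [h3]; exact Real.sin_nat_mul_pi _
  have hphiN : ∀ ε : ℝ, ∀ i : ℕ, phiF ε γ lam (tNode a γ lam i) = 0 := by
    intro ε i; rw [phiF, hsinN, hsinN2]; ring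
  -- the amplitudes
  have htNmemIcc : ∀ i : ℕ, i ≤ k → tNode a γ lam i ∈ Icc a b := by
    intro i hik
    constructor
    · have h := htNmono 0 i (Nat.zero_le _); rwa [htN0] at h
    · have h := htNmono i k hik; rwa [htNk] at h
  have haIoo : a ∈ Ioo (0:ℝ) T0 := ⟨ha, hab.trans hbT0⟩
  have htNIoo : ∀ i : ℕ, i ≤ k → tNode a γ lam i ∈ Ioo (0:ℝ) T0 := by
    intro i hik
    obtain ⟨h1, h2⟩ := htNmemIcc i hik
    exact ⟨lt_of_lt_of_le ha h1, lt_of_le_of_lt h2 hbT0⟩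
  have hεL : ∀ i : ℕ, i ≤ k → ν * θ (tNode a γ lam i) ≤ L := by
    intro i hik
    have h1 : θ (tNode a γ lam i) ≤ θ a := hθmono haIoo (htNIoo i hik) (htNmemIcc i hik).1
    have h2 : θ (tNode a γ lam i) ≤ lam * W := le_trans h1 hθa
    rw [hL_def]
    exact mul_le_mul_of_nonneg_left h2 hνpos.le
  have hεnn : ∀ i : ℕ, i ≤ k → 0 ≤ ν * θ (tNode a γ lam i) := by
    intro i hik
    exact mul_nonneg hνpos.le (hθpos _ (htNIoo i hik)).le
  have hε8 : ∀ i : ℕ, i ≤ k → ν * θ (tNode a γ lam i) ≤ 8 * γ ^ 3 * lam := by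
    intro i hik
    have h1 := hεL i hik
    have h2 : L ≤ 8 * γ ^ 3 * lam := by
      rw [hL_def]
      calc ν * (lam * W) = ν * W * lam := by ring
        _ ≤ 8 * γ ^ 3 * lam := mul_le_mul_of_nonneg_right hlam1 hlam.le
    linarith
  -- values
  have hcla : ∀ t ∈ Icc (0:ℝ) a, cl t = γ ^ 2 := by
    intro t ht
    rw [hclOut t (Or.inl ht), hc1 t ⟨ht.1, le_trans ht.2 haT1.le⟩]
  have hclNode : ∀ i : ℕ, i ≤ k → cl (tNode a γ lam i) = γ ^ 2 := by
    intro i hik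
    rcases Nat.eq_zero_or_pos i with h | h
    · rw [h, htN0]; exact hcla a ⟨ha.le, le_rfl⟩
    · rw [hclIn i h hik (tNode a γ lam i) ⟨htNmono (i-1) i (Nat.sub_le i 1), le_rfl⟩, hphiN]
      ring
  -- covering
  have hcover : ∀ t ∈ Icc a b, ∃ i : ℕ, 1 ≤ i ∧ i ≤ k ∧
      tNode a γ lam (i-1) ≤ t ∧ t ≤ tNode a γ lam i := by
    intro t ht
    set r := (t - a) / d with hr_def
    have hr0 : 0 ≤ r := div_nonneg (by linarith [ht.1]) hd.le
    have htr : t = a + d * r := by rw [hr_def]; field_simp; ring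
    have hrk : r ≤ k := by
      rw [hr_def, div_le_iff₀ hd]
      linarith [ht.2, hdk]
    refine ⟨max 1 ⌈r⌉₊, le_max_left _ _, max_le hk1 (Nat.ceil_le.mpr hrk), ?_, ?_⟩
    · rcases le_or_gt ⌈r⌉₊ 1 with h | h
      · rw [max_eq_left h]
        simpa [htN0] using ht.1
      · rw [max_eq_right h.le]
        rw [htN, htr]
        have hcast : ((⌈r⌉₊ - 1 : ℕ) : ℝ) = (⌈r⌉₊ : ℝ) - 1 := by
          have : 1 ≤ ⌈r⌉₊ := h.le
          push_cast [Nat.cast_sub this]; ring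
        rw [hcast]
        have h4 := Nat.ceil_lt_add_one hr0
        have h5 : (⌈r⌉₊ : ℝ) - 1 ≤ r := by linarith
        exact add_le_add_right (mul_le_mul_of_nonneg_left h5 hd.le) a
    · rw [htN, htr]
      have h1 : r ≤ (max 1 ⌈r⌉₊ : ℕ) := by
        have := Nat.le_ceil r
        have h2 : ((⌈r⌉₊ : ℕ) : ℝ) ≤ ((max 1 ⌈r⌉₊ : ℕ) : ℝ) := Nat.cast_le.mpr (le_max_right _ _)
        linarith
      exact add_le_add_right (mul_le_mul_of_nonneg_left h1 hd.le) a
  have hclval : ∀ t ∈ Icc a b, ∃ i : ℕ, 1 ≤ i ∧ i ≤ k ∧ t ≤ tNode a γ lam i ∧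
      cl t = γ ^ 2 - phiF (ν * θ (tNode a γ lam i)) γ lam t := by
    intro t ht
    obtain ⟨i, h1, h2, h3, h4⟩ := hcover t ht
    exact ⟨i, h1, h2, h4, by rw [hclIn i h1 h2 t ⟨h3, h4⟩, hν_def]⟩
  -- sup bound
  have hsup : ∀ t ∈ Icc (0:ℝ) b, |cl t - γ ^ 2| ≤ M := by
    intro t ht
    rcases le_or_gt t a with h | h
    · rw [hcla t ⟨ht.1, h⟩]; simp [hMpos.le]
    · obtain ⟨i, h1, h2, h3, h4⟩ := hclval t ⟨h.le, ht.2⟩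
      rw [h4]
      have hb1 : |phiF (ν * θ (tNode a γ lam i)) γ lam t| ≤ ν * θ (tNode a γ lam i) / (2 * γ * lam) :=
        phi_bound hγ hlam (hεnn i h2) (hε8 i h2) t
      have hb2 : ν * θ (tNode a γ lam i) / (2 * γ * lam) ≤ M := by
        have hb2' : ν * θ (tNode a γ lam i) / (2 * γ * lam) ≤ L / (2 * γ * lam) :=
          div_le_div_of_nonneg_right (hεL i h2) (by positivity) |>.trans_eq rfl
        have hLM : L / (2 * γ * lam) = M := by
          rw [hL_def, hM_def]; field_simp
        linarith
      calc |γ ^ 2 - phiF (ν * θ (tNode a γ lam i)) γ lam t - γ ^ 2|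
          = |phiF (ν * θ (tNode a γ lam i)) γ lam t| := by rw [abs_sub_comm]; ring_nf
        _ ≤ M := le_trans hb1 hb2
  -- piecewise Lipschitz
  have hpieceLip : ∀ i : ℕ, 1 ≤ i → i ≤ k → ∀ t s : ℝ,
      tNode a γ lam (i-1) ≤ t → t ≤ tNode a γ lam i →
      tNode a γ lam (i-1) ≤ s → s ≤ tNode a γ lam i →
      |cl t - cl s| ≤ L * |t - s| := by
    intro i h1 h2 t s ht1 ht2 hs1 hs2
    rw [hclIn i h1 h2 t ⟨ht1, ht2⟩, hclIn i h1 h2 s ⟨hs1, hs2⟩]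
    have heq : γ ^ 2 - phiF (ν * θ (tNode a γ lam i)) γ lam t -
        (γ ^ 2 - phiF (ν * θ (tNode a γ lam i)) γ lam s) =
        -(phiF (ν * θ (tNode a γ lam i)) γ lam t - phiF (ν * θ (tNode a γ lam i)) γ lam s) := by
      ring
    rw [heq, abs_neg]
    calc |phiF (ν * θ (tNode a γ lam i)) γ lam t - phiF (ν * θ (tNode a γ lam i)) γ lam s|
        ≤ ν * θ (tNode a γ lam i) * |t - s| :=
          phi_lipschitz hγ hlam (hεnn i h2) (hε8 i h2) t s
      _ ≤ L * |t - s| := mul_le_mul_of_nonneg_right (hεL i h2) (abs_nonneg _)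
  -- global Lipschitz on [0, b]
  have hlipKey : ∀ j : ℕ, j ≤ k → ∀ t s : ℝ, 0 ≤ t → t ≤ s → s ≤ tNode a γ lam j →
      |cl t - cl s| ≤ L * (s - t) := by
    intro j
    induction j with
    | zero =>
      intro _ t s ht hts hs
      rw [htN0] at hs
      rw [hcla t ⟨ht, hts.trans hs⟩, hcla s ⟨ht.trans hts, hs⟩]
      simp only [sub_self, abs_zero]
      have : 0 ≤ s - t := by linarith
      positivity
    | succ j ih =>
      intro hjk t s ht hts hs
      have hjk' : j ≤ k := le_trans (Nat.le_succ j) hjk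
      rcases le_or_gt s (tNode a γ lam j) with h | h
      · exact ih hjk' t s ht hts h
      · have hj1 : 1 ≤ j + 1 := Nat.le_add_left 1 j
        have hsub : (j + 1) - 1 = j := rfl
        rcases le_or_gt (tNode a γ lam j) t with h2 | h2
        · have := hpieceLip (j+1) hj1 hjk t s (by rw [hsub]; exact h2) (hts.trans hs)
            (by rw [hsub]; exact (h2.trans hts)) hs
          rwa [abs_of_nonpos (show t - s ≤ 0 by linarith), neg_sub] at this
        · have e1 : |cl t - cl (tNode a γ lam j)| ≤ L * (tNode a γ lam j - t) :=
            ih hjk' t (tNode a γ lam j) ht h2.le le_rfl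
          have e2 : |cl (tNode a γ lam j) - cl s| ≤ L * (s - tNode a γ lam j) := by
            have := hpieceLip (j+1) hj1 hjk (tNode a γ lam j) s
              (by rw [hsub]) (htNmono j (j+1) (Nat.le_succ j)) (by rw [hsub]; exact h.le) hs
            rwa [abs_of_nonpos (show tNode a γ lam j - s ≤ 0 by linarith), neg_sub] at this
          calc |cl t - cl s| ≤ |cl t - cl (tNode a γ lam j)| + |cl (tNode a γ lam j) - cl s| :=
                abs_sub_le _ _ _
            _ ≤ L * (tNode a γ lam j - t) + L * (s - tNode a γ lam j) := add_le_add e1 e2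
            _ = L * (s - t) := by ring
  have hlip : ∀ t s : ℝ, 0 ≤ t → t ≤ s → s ≤ b → |cl t - cl s| ≤ L * (s - t) := by
    intro t s ht hts hs
    exact hlipKey k le_rfl t s ht hts (by rw [htNk]; exact hs)
  -- nonnegativity of ω at 0
  have hω0 : 0 ≤ ω 0 := by
    have := hc_mod 0 ⟨le_rfl, hT0.le⟩ 0 ⟨le_rfl, hT0.le⟩
    simpa using this
  have hωnn : ∀ σ : ℝ, 0 ≤ σ → 0 ≤ ω σ := by
    intro σ hσ
    rcases eq_or_lt_of_le hσ with h | h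
    · rw [← h]; exact hω0
    · exact (hωpos σ h).le
  -- slope comparison
  have hslope : ∀ σ : ℝ, 0 < σ → σ ≤ 1 / lam → lam * W * σ ≤ ω σ := by
    intro σ hσ hσ2
    have h1 := hωslope σ (1 / lam) hσ hσ2
    rw [← hW_def, div_le_div_iff₀ (hωpos σ hσ) hWpos] at h1
    have h2 := mul_le_mul_of_nonneg_left h1 hlam.le
    have h3 : lam * (1 / lam * ω σ) = ω σ := by field_simp
    calc lam * W * σ = lam * (σ * W) := by ring
      _ ≤ lam * (1 / lam * ω σ) := h2
      _ = ω σ := h3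
  -- the key modulus bound on [0, b]
  have hkeyb : ∀ t s : ℝ, 0 ≤ t → t ≤ s → s ≤ b → |cl t - cl s| ≤ ω (s - t) := by
    intro t s ht hts hs
    rcases eq_or_lt_of_le hts with h | h
    · rw [h]; simpa using hω0
    · rcases le_or_gt (s - t) (1 / lam) with h2 | h2
      · have e1 := hlip t s ht hts hs
        have e2 := hslope (s - t) (sub_pos.mpr h) h2
        have e3 : L * (s - t) = ν * (lam * W * (s - t)) := by rw [hL_def]; ring
        have e4 : ν * (lam * W * (s - t)) ≤ ν * ω (s - t) :=
          mul_le_mul_of_nonneg_left e2 hνpos.le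
        have e5 : ν * ω (s - t) ≤ ω (s - t) := by
          have hωnn' := hωnn (s - t) (sub_nonneg.mpr hts)
          have h6 : 0 ≤ (1 - ν) * ω (s - t) := mul_nonneg (by linarith only [hν1]) hωnn'
          linarith only [h6]
        linarith only [e1, e3, e4, e5]
      · have e1 : |cl t - γ ^ 2| ≤ M := hsup t ⟨ht, hts.trans hs⟩
        have e2 : |cl s - γ ^ 2| ≤ M := hsup s ⟨ht.trans hts, hs⟩
        have e3 : ω (1 / lam) ≤ ω (s - t) := hωmono (1 / lam) (s - t) (by positivity) h2.le
        calc |cl t - cl s| ≤ |cl t - γ ^ 2| + |γ ^ 2 - cl s| := abs_sub_le _ _ _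
          _ = |cl t - γ ^ 2| + |cl s - γ ^ 2| := by rw [abs_sub_comm (γ ^ 2) (cl s)]
          _ ≤ M + M := add_le_add e1 e2
          _ ≤ W := by linarith only [h2M]
          _ ≤ ω (s - t) := by rw [hW_def]; exact e3
  -- the full modulus estimate
  have hmodAux : ∀ t s : ℝ, t ∈ Icc 0 T0 → s ∈ Icc 0 T0 → t ≤ s → |cl t - cl s| ≤ ω (s - t) := by
    intro t s ht hs hts
    rcases le_or_gt s b with h | h
    · exact hkeyb t s ht.1 hts h
    · rcases le_or_gt b t with h2 | h2
      · rw [hclOut t (Or.inr ⟨h2, ht.2⟩), hclOut s (Or.inr ⟨h2.trans hts, hs.2⟩)]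
        have := hc_mod t ht s hs
        rwa [abs_of_nonpos (show t - s ≤ 0 by linarith), neg_sub] at this
      · -- t < b < s
        have hclb : cl b = γ ^ 2 := by rw [← htNk]; exact hclNode k le_rfl
        rcases le_or_gt s T1 with h3 | h3
        · have hcls : cl s = γ ^ 2 := by
            rw [hclOut s (Or.inr ⟨h.le, hs.2⟩)]
            exact hc1 s ⟨hs.1, h3⟩
          have e1 : |cl t - cl b| ≤ ω (b - t) := hkeyb t b ht.1 h2.le le_rfl
          have e2 : ω (b - t) ≤ ω (s - t) := hωmono (b - t) (s - t) (by linarith) (by linarith)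
          rw [hcls, ← hclb]
          linarith only [e1, e2]
        · have e1 : |cl t - cl b| ≤ ω (b - t) := hkeyb t b ht.1 h2.le le_rfl
          have e2 : ω (b - t) ≤ ω b := hωmono (b - t) b (by linarith) (by linarith [ht.1])
          have e3 : ω (T1 - b) ≤ ω (s - t) := hωmono (T1 - b) (s - t) (by linarith) (by linarith)
          have e4 : |cl t - cl b| ≤ η * ω (s - t) := by
            have h5 := mul_le_mul_of_nonneg_left e3 hη.1.le
            linarith only [e1, e2, hωb, h5]
          have e5 : |cl b - cl s| ≤ (1 - η) * ω (s - t) := by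
            rw [hclOut b (Or.inr ⟨le_rfl, hbT0.le⟩), hclOut s (Or.inr ⟨h.le, hs.2⟩)]
            have h6 := hc2 b ⟨(ha.trans hab).le, hbT0.le⟩ s hs
            have h7 : |b - s| = s - b := by rw [abs_sub_comm]; exact abs_of_nonneg (by linarith)
            rw [h7] at h6
            have h8 : ω (s - b) ≤ ω (s - t) := hωmono (s - b) (s - t) (by linarith) (by linarith)
            have h9 : (0:ℝ) ≤ 1 - η := by linarith [hη.2]
            have h10 := mul_le_mul_of_nonneg_left h8 h9
            linarith only [h6, h10]
          calc |cl t - cl s| ≤ |cl t - cl b| + |cl b - cl s| := abs_sub_le _ _ _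
            _ ≤ η * ω (s - t) + (1 - η) * ω (s - t) := add_le_add e4 e5
            _ = ω (s - t) := by ring
  have hmod : ∀ t ∈ Icc (0:ℝ) T0, ∀ s ∈ Icc (0:ℝ) T0, |cl t - cl s| ≤ ω |t - s| := by
    intro t ht s hs
    rcases le_total t s with h | h
    · rw [abs_sub_comm t s, abs_of_nonneg (sub_nonneg.mpr h)]
      exact hmodAux t s ht hs h
    · rw [abs_of_nonneg (sub_nonneg.mpr h), abs_sub_comm]
      exact hmodAux s t hs ht h
  -- |cl - γ²| within [0,b] and abs-Lipschitz helper
  have hlipAbs : ∀ u v : ℝ, 0 ≤ u → u ≤ b → 0 ≤ v → v ≤ b → |cl u - cl v| ≤ L * |u - v| := by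
    intro u v hu1 hu2 hv1 hv2
    rcases le_total u v with h | h
    · rw [abs_sub_comm u v, abs_of_nonneg (sub_nonneg.mpr h)]
      exact hlip u v hu1 h hv2
    · rw [abs_of_nonneg (sub_nonneg.mpr h), abs_sub_comm]
      exact hlip v u hv1 h hu2
  -- continuity
  have hcont : ContinuousOn cl (Icc 0 T0) := by
    rw [Metric.continuousOn_iff]
    intro x hx ε hε
    obtain ⟨δ, hδ, H⟩ := Metric.tendsto_nhdsWithin_nhds.mp hωtend ε hε
    refine ⟨δ, hδ, fun y hy hyx => ?_⟩
    rcases eq_or_ne y x with rfl | hne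
    · simpa using hε
    · have habs : 0 < |y - x| := abs_pos.mpr (sub_ne_zero.mpr hne)
      have h1 : dist (cl y) (cl x) ≤ ω |y - x| := by
        rw [Real.dist_eq]; exact hmod y hy x hx
      have h2 : dist (ω |y - x|) 0 < ε := by
        refine H (mem_Ioi.mpr habs) ?_
        rw [Real.dist_eq, sub_zero, abs_of_pos habs]
        rw [Real.dist_eq] at hyx
        exact hyx
      rw [Real.dist_eq, sub_zero, abs_of_nonneg (hωnn _ habs.le)] at h2
      linarith only [h1, h2]
  -- local Lipschitz
  have hbIoo : b ∈ Ioo (0:ℝ) T0 := ⟨ha.trans hab, hbT0⟩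
  have hliploc : LocallyLipschitzOn (Ioo 0 T0) cl := by
    intro x hx
    rcases lt_trichotomy x b with hxb | hxb | hxb
    · refine ⟨L.toNNReal, Ioo 0 T0 ∩ Iio b,
        inter_mem self_mem_nhdsWithin (mem_nhdsWithin_of_mem_nhds (Iio_mem_nhds hxb)), ?_⟩
      rw [lipschitzOnWith_iff_dist_le_mul]
      intro u hu v hv
      rw [Real.dist_eq, Real.dist_eq, Real.coe_toNNReal L hLpos.le]
      exact hlipAbs u v hu.1.1.le hu.2.le hv.1.1.le hv.2.le
    · subst hxb
      obtain ⟨K, t, ht, hK⟩ := hc_lip hx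
      have hbt : x ∈ t := mem_of_mem_nhdsWithin hx ht
      refine ⟨L.toNNReal + K, t ∩ Ioo 0 T0, inter_mem ht self_mem_nhdsWithin, ?_⟩
      rw [lipschitzOnWith_iff_dist_le_mul]
      have hKd := lipschitzOnWith_iff_dist_le_mul.mp hK
      have hC : ((L.toNNReal + K : NNReal) : ℝ) = L + K := by
        push_cast [Real.coe_toNNReal L hLpos.le]; ring
      have hKnn : (0:ℝ) ≤ K := K.coe_nonneg
      have main : ∀ u ∈ t ∩ Ioo 0 T0, ∀ v ∈ t ∩ Ioo 0 T0, u ≤ v →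
          dist (cl u) (cl v) ≤ (L + K) * dist u v := by
        intro u hu v hv huv
        rcases le_or_gt v x with h1 | h1
        · rw [Real.dist_eq, Real.dist_eq]
          calc |cl u - cl v| ≤ L * |u - v| :=
                hlipAbs u v hu.2.1.le (huv.trans h1) hv.2.1.le h1
            _ ≤ (L + K) * |u - v| :=
                mul_le_mul_of_nonneg_right (by linarith only [hKnn]) (abs_nonneg _)
        · rcases le_or_gt x u with h2 | h2
          · rw [hclOut u (Or.inr ⟨h2, hu.2.2.le⟩), hclOut v (Or.inr ⟨h2.trans huv, hv.2.2.le⟩)]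
            calc dist (cstar u) (cstar v) ≤ K * dist u v := hKd u hu.1 v hv.1
              _ ≤ (L + K) * dist u v :=
                mul_le_mul_of_nonneg_right (by linarith only [hLpos]) dist_nonneg
          · have e1 : |cl u - cl x| ≤ L * (x - u) := hlip u x hu.2.1.le h2.le le_rfl
            have e2 : dist (cl x) (cl v) ≤ K * (v - x) := by
              rw [hclOut x (Or.inr ⟨le_rfl, hbT0.le⟩), hclOut v (Or.inr ⟨h1.le, hv.2.2.le⟩)]
              have hthis := hKd x hbt v hv.1
              have hdxv : dist x v = v - x := by
                rw [Real.dist_eq, abs_of_nonpos (show x - v ≤ 0 by linarith), neg_sub]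
              rwa [hdxv] at hthis
            have e3 : dist u v = v - u := by
              rw [Real.dist_eq, abs_of_nonpos (show u - v ≤ 0 by linarith), neg_sub]
            calc dist (cl u) (cl v) ≤ dist (cl u) (cl x) + dist (cl x) (cl v) := dist_triangle _ _ _
              _ ≤ L * (x - u) + K * (v - x) := by
                  rw [Real.dist_eq]
                  exact add_le_add e1 e2
              _ ≤ L * (v - u) + K * (v - u) := by
                  have g1 : L * (x - u) ≤ L * (v - u) :=
                    mul_le_mul_of_nonneg_left (by linarith) hLpos.le
                  have g2 : K * (v - x) ≤ K * (v - u) :=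
                    mul_le_mul_of_nonneg_left (by linarith) hKnn
                  linarith only [g1, g2]
              _ = (L + K) * dist u v := by rw [e3]; ring
      intro u hu v hv
      rw [hC]
      rcases le_total u v with h | h
      · exact main u hu v hv h
      · rw [dist_comm, dist_comm u v]
        exact main v hv u hu h
    · obtain ⟨K, t, ht, hK⟩ := hc_lip hx
      refine ⟨K, t ∩ (Ioo 0 T0 ∩ Ioi b),
        inter_mem ht (inter_mem self_mem_nhdsWithin (mem_nhdsWithin_of_mem_nhds (Ioi_mem_nhds hxb))), ?_⟩
      rw [lipschitzOnWith_iff_dist_le_mul]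
      intro u hu v hv
      rw [hclOut u (Or.inr ⟨hu.2.2.le, hu.2.1.2.le⟩), hclOut v (Or.inr ⟨hv.2.2.le, hv.2.1.2.le⟩)]
      exact lipschitzOnWith_iff_dist_le_mul.mp hK u hu.1 v hv.1
  -- pointwise bounds
  have hMmin : M ≤ min (γ ^ 2 - μ1) (μ2 - γ ^ 2) := hlam2
  have hbnd : ∀ t ∈ Ioo (0:ℝ) T0, μ1 ≤ cl t ∧ cl t ≤ μ2 := by
    intro t ht
    rcases le_or_gt t a with h | h
    · rw [hclOut t (Or.inl ⟨ht.1.le, h⟩)]; exact hc_bnd t ht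
    · rcases le_or_gt b t with h2 | h2
      · rw [hclOut t (Or.inr ⟨h2, ht.2.le⟩)]; exact hc_bnd t ht
      · have hsupt := hsup t ⟨ht.1.le, h2.le⟩
        have habs := abs_le.mp hsupt
        have g1 := hMmin.trans (min_le_left _ _)
        have g2 := hMmin.trans (min_le_right _ _)
        constructor <;> [linarith only [habs.1, habs.2, g1]; linarith only [habs.1, habs.2, g2]]
  -- a.e. derivative bound
  have hae : ∀ᵐ t ∂(volume.restrict (Ioo 0 T0)), |deriv cl t| ≤ θ t := by
    have hNnull : ∀ᵐ t ∂(volume.restrict (Ioo 0 T0)),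
        t ∉ range (fun i : ℕ => tNode a γ lam i) := by
      refine ae_restrict_of_ae ?_
      exact Set.Countable.ae_notMem (countable_range _) _
    filter_upwards [hc_ae, hNnull, ae_restrict_mem measurableSet_Ioo] with t h1 h2 h3
    rcases lt_or_ge t a with h4 | h4
    · have hev : cl =ᶠ[nhds t] cstar := by
        filter_upwards [Ioo_mem_nhds h3.1 h4] with y hy
        exact hclOut y (Or.inl ⟨hy.1.le, hy.2.le⟩)
      rw [hev.deriv_eq]; exact h1
    · rcases lt_or_ge b t with h5 | h5
      · have hev : cl =ᶠ[nhds t] cstar := by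
          filter_upwards [Ioo_mem_nhds h5 h3.2] with y hy
          exact hclOut y (Or.inr ⟨hy.1.le, hy.2.le⟩)
        rw [hev.deriv_eq]; exact h1
      · obtain ⟨i, hi1, hik, hta, htb⟩ := hcover t ⟨h4, h5⟩
        have hlt1 : tNode a γ lam (i-1) < t :=
          lt_of_le_of_ne hta (fun hcontra => h2 ⟨i-1, hcontra⟩)
        have hlt2 : t < tNode a γ lam i :=
          lt_of_le_of_ne htb (fun hcontra => h2 ⟨i, hcontra.symm⟩)
        have hev : cl =ᶠ[nhds t] (fun y => γ ^ 2 - phiF (ν * θ (tNode a γ lam i)) γ lam y) := by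
          filter_upwards [Ioo_mem_nhds hlt1 hlt2] with y hy
          exact hclIn i hi1 hik y ⟨hy.1.le, hy.2.le⟩
        rw [hev.deriv_eq]
        have hD : HasDerivAt (fun y => γ ^ 2 - phiF (ν * θ (tNode a γ lam i)) γ lam y)
            (-(ν * θ (tNode a γ lam i) / 2 * Real.cos (2 * γ * lam * t) +
              (ν * θ (tNode a γ lam i)) ^ 2 / (16 * γ ^ 3 * lam) *
                (Real.sin (γ * lam * t) ^ 3 * Real.cos (γ * lam * t)))) t :=
          (phi_hasDerivAt hγ hlam (ν * θ (tNode a γ lam i)) t).const_sub (γ ^ 2)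
        rw [hD.deriv, abs_neg]
        have hbound := phi_deriv_bound hγ hlam (hεnn i hik) (hε8 i hik) t
        have hθle : θ (tNode a γ lam i) ≤ θ t := hθmono h3 (htNIoo i hik) htb
        have hθnn : (0:ℝ) ≤ θ (tNode a γ lam i) := (hθpos _ (htNIoo i hik)).le
        have hν1' : ν * θ (tNode a γ lam i) ≤ θ (tNode a γ lam i) := by
          calc ν * θ (tNode a γ lam i) ≤ 1 * θ (tNode a γ lam i) :=
                mul_le_mul_of_nonneg_right (by linarith only [hν1]) hθnn
            _ = θ (tNode a γ lam i) := one_mul _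
        linarith only [hbound, hν1', hθle]
  -- conclusion
  refine ⟨⟨hcont, hliploc, hbnd, hmod, hae⟩, ?_⟩
  intro t ht
  rcases le_or_gt t a with h | h
  · rw [hclOut t (Or.inl ⟨ht.1, h⟩)]
    simp only [sub_self, abs_zero]
    exact hMpos.le
  · rcases le_or_gt b t with h2 | h2
    · rw [hclOut t (Or.inr ⟨h2, ht.2⟩)]
      simp only [sub_self, abs_zero]
      exact hMpos.le
    · have hcst : cstar t = γ ^ 2 := hc1 t ⟨ht.1, le_trans h2.le hb.le⟩
      rw [hcst]
      exact hsup t ⟨ht.1, h2.le⟩
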